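/- Closed form for the tunnelling time of the Morse family: let β, γ, E be real numbers with β ≥ 0 and β² < 16π²(γ − E). Then (1/2)·∫₀^∞ (4π²e^{2w} − βe^{w} + γ − E)^{−1/2} dw = (1/(2√(γ−E)))·log[ (2√(γ−E)·√(γ−E+4π²−β) + 2(γ−E) − β) / (4π√(γ−E) − β) ]. -/

import Mathlib

open MeasureTheory

/-- Closed form for the tunnelling time of the Morse family: for `β ≥ 0` and
`β² < 16π²(γ−E)`,
`(1/2)∫₀^∞ (4π²e^{2w} − βe^w + γ − E)^{−1/2} dw
  = (1/(2√(γ−E))) log[(2√(γ−E)√(γ−E+4π²−β) + 2(γ−E) − β)/(4π√(γ−E) − β)]`. -/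
theorem morse_tunnelling_time_closed_form (β γ E : ℝ) (hβ : 0 ≤ β)
    (h : β ^ 2 < 16 * Real.pi ^ 2 * (γ - E)) :
    (1 / 2) * ∫ w in Set.Ioi (0:ℝ),
        (Real.sqrt (4 * Real.pi ^ 2 * Real.exp (2 * w) - β * Real.exp w + γ - E))⁻¹ =
      (1 / (2 * Real.sqrt (γ - E))) *
        Real.log ((2 * Real.sqrt (γ - E) * Real.sqrt (γ - E + 4 * Real.pi ^ 2 - β) +
            2 * (γ - E) - β) / (4 * Real.pi * Real.sqrt (γ - E) - β)) := by
  have hπ := Real.pi_pos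
  obtain ⟨c, hcdef⟩ : ∃ c, γ - E = c := ⟨γ - E, rfl⟩
  rw [hcdef] at h
  simp only [show ∀ A : ℝ, A + γ - E = A + c from fun A => by rw [← hcdef]; ring]
  rw [hcdef]
  have hc : 0 < c := by nlinarith [sq_nonneg β, sq_nonneg Real.pi]
  have hr : 0 < Real.sqrt c := Real.sqrt_pos.mpr hc
  have hr2 : Real.sqrt c ^ 2 = c := Real.sq_sqrt hc.le
  have hQpos : ∀ t : ℝ, 0 < c * t ^ 2 - β * t + 4 * Real.pi ^ 2 := by
    intro t
    nlinarith [sq_nonneg (2 * c * t - β)]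
  have hinner : ∀ t : ℝ,
      0 < 2 * Real.sqrt c * Real.sqrt (c * t ^ 2 - β * t + 4 * Real.pi ^ 2) + 2 * c * t - β := by
    intro t
    have hQ := hQpos t
    have hs : 0 < Real.sqrt (c * t ^ 2 - β * t + 4 * Real.pi ^ 2) := Real.sqrt_pos.mpr hQ
    have hs2 : Real.sqrt (c * t ^ 2 - β * t + 4 * Real.pi ^ 2) ^ 2 =
        c * t ^ 2 - β * t + 4 * Real.pi ^ 2 := Real.sq_sqrt hQ.le
    nlinarith [mul_pos hr hs,
      sq_nonneg (2 * Real.sqrt c * Real.sqrt (c * t ^ 2 - β * t + 4 * Real.pi ^ 2) - (β - 2 * c * t)),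
      sq_nonneg (2 * c * t - β)]
  -- the antiderivative
  set f : ℝ → ℝ := fun w => -(Real.sqrt c)⁻¹ * Real.log (2 * Real.sqrt c *
      Real.sqrt (c * Real.exp (-w) ^ 2 - β * Real.exp (-w) + 4 * Real.pi ^ 2) +
      2 * c * Real.exp (-w) - β) with hfdef
  have hderiv : ∀ w : ℝ, HasDerivAt f
      ((Real.sqrt (4 * Real.pi ^ 2 * Real.exp (2 * w) - β * Real.exp w + c))⁻¹) w := by
    intro w
    have hQ := hQpos (Real.exp (-w))
    have hs : 0 < Real.sqrt (c * Real.exp (-w) ^ 2 - β * Real.exp (-w) + 4 * Real.pi ^ 2) :=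
      Real.sqrt_pos.mpr hQ
    have hrescale : Real.sqrt (4 * Real.pi ^ 2 * Real.exp (2 * w) - β * Real.exp w + c) =
        Real.exp w * Real.sqrt (c * Real.exp (-w) ^ 2 - β * Real.exp (-w) + 4 * Real.pi ^ 2) := by
      have : 4 * Real.pi ^ 2 * Real.exp (2 * w) - β * Real.exp w + c =
          Real.exp w ^ 2 * (c * Real.exp (-w) ^ 2 - β * Real.exp (-w) + 4 * Real.pi ^ 2) := by
        have h1 : Real.exp w * Real.exp (-w) = 1 := by
          rw [← Real.exp_add]; simp
        have h2 : Real.exp (2 * w) = Real.exp w ^ 2 := by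
          rw [← Real.exp_nat_mul]; norm_num
        rw [h2, Real.exp_neg]
        field_simp
        ring
      rw [this, Real.sqrt_mul (sq_nonneg _), Real.sqrt_sq (Real.exp_pos w).le]
    have htarget : (Real.sqrt (4 * Real.pi ^ 2 * Real.exp (2 * w) - β * Real.exp w + c))⁻¹ =
        Real.exp (-w) * (Real.sqrt (c * Real.exp (-w) ^ 2 - β * Real.exp (-w) + 4 * Real.pi ^ 2))⁻¹ := by
      rw [hrescale, mul_inv, Real.exp_neg]
    rw [htarget]
    -- now prove the derivative
    have hr2' := hr2
    have ht : HasDerivAt (fun w : ℝ => Real.exp (-w)) (-Real.exp (-w)) w := by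
      exact ((Real.hasDerivAt_exp (-w)).comp w ((hasDerivAt_id w).neg)).congr_deriv (by simp)
    have hQd : HasDerivAt (fun w : ℝ => c * Real.exp (-w) ^ 2 - β * Real.exp (-w) + 4 * Real.pi ^ 2)
        ((2 * c * Real.exp (-w) - β) * (-Real.exp (-w))) w := by
      have := (((ht.pow 2).const_mul c).sub (ht.const_mul β)).add_const (4 * Real.pi ^ 2)
      refine this.congr_deriv (Eq.symm ?_)
      ring
    have hsd := hQd.sqrt hQ.ne'
    have hid := ((hsd.const_mul (2 * Real.sqrt c)).add (ht.const_mul (2 * c))).sub_const β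
    have hlog := (hid.log (hinner (Real.exp (-w))).ne').const_mul (-(Real.sqrt c)⁻¹)
    refine hlog.congr_deriv (Eq.symm ?_)
    simp only [Pi.add_apply]
    generalize hS : Real.sqrt (c * Real.exp (-w) ^ 2 - β * Real.exp (-w) + 4 * Real.pi ^ 2) = s at *
    generalize hR : Real.sqrt c = r at *
    generalize hT : Real.exp (-w) = t at *
    have hi := hinner t
    rw [hS] at hi
    have hD : 2 * (s * r + t * c) - β ≠ 0 := by linarith
    field_simp
    linear_combination (2 * t * s) * hr2'
  -- the limit at infinity
  have hden : 0 < 4 * Real.pi * Real.sqrt c - β := by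
    nlinarith [hr2, mul_pos hπ hr, sq_nonneg (4 * Real.pi * Real.sqrt c - β)]
  have hlim : Filter.Tendsto f Filter.atTop
      (nhds (-(Real.sqrt c)⁻¹ * Real.log (4 * Real.pi * Real.sqrt c - β))) := by
    have hexp : Filter.Tendsto (fun w : ℝ => Real.exp (-w)) Filter.atTop (nhds 0) := by
      exact Real.tendsto_exp_atBot.comp Filter.tendsto_neg_atTop_atBot
    have harg : Filter.Tendsto (fun w : ℝ => 2 * Real.sqrt c *
        Real.sqrt (c * Real.exp (-w) ^ 2 - β * Real.exp (-w) + 4 * Real.pi ^ 2) +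
        2 * c * Real.exp (-w) - β) Filter.atTop (nhds (4 * Real.pi * Real.sqrt c - β)) := by
      have h1 : Filter.Tendsto (fun w : ℝ => c * Real.exp (-w) ^ 2 - β * Real.exp (-w) + 4 * Real.pi ^ 2)
          Filter.atTop (nhds (4 * Real.pi ^ 2)) := by
        have := ((hexp.pow 2).const_mul c).sub (hexp.const_mul β) |>.add_const (4 * Real.pi ^ 2)
        simpa using this
      have h2 := (Real.continuous_sqrt.continuousAt.tendsto.comp h1).const_mul (2 * Real.sqrt c)
      have h3 := (h2.add (hexp.const_mul (2 * c))).sub_const β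
      have h4 : Real.sqrt (4 * Real.pi ^ 2) = 2 * Real.pi := by
        rw [show (4 : ℝ) * Real.pi ^ 2 = (2 * Real.pi) ^ 2 by ring,
          Real.sqrt_sq (by positivity)]
      rw [show 4 * Real.pi * Real.sqrt c - β =
        2 * Real.sqrt c * Real.sqrt (4 * Real.pi ^ 2) + 2 * c * 0 - β by rw [h4]; ring]
      exact h3
    exact ((Real.continuousAt_log hden.ne').tendsto.comp harg).const_mul (-(Real.sqrt c)⁻¹)
  have key := MeasureTheory.integral_Ioi_of_hasDerivAt_of_nonneg'
    (g := f) (a := 0) (fun x _ => hderiv x) (fun x _ => by positivity) hlim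
  rw [key]
  have hf0 : f 0 = -(Real.sqrt c)⁻¹ *
      Real.log (2 * Real.sqrt c * Real.sqrt (c + 4 * Real.pi ^ 2 - β) + 2 * c - β) := by
    simp only [hfdef, neg_zero, Real.exp_zero]
    rw [show c * 1 ^ 2 - β * 1 + 4 * Real.pi ^ 2 = c + 4 * Real.pi ^ 2 - β by ring]
    norm_num
  rw [hf0]
  have hnum : 0 < 2 * Real.sqrt c * Real.sqrt (c + 4 * Real.pi ^ 2 - β) + 2 * c - β := by
    have := hinner 1
    have harg : c * 1 ^ 2 - β * 1 + 4 * Real.pi ^ 2 = c + 4 * Real.pi ^ 2 - β := by ring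
    rw [harg] at this
    linarith [this]
  rw [Real.log_div hnum.ne' hden.ne']
  field_simp
  ring
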